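/- arXiv:1405.2293 — 2 statements merged into one kernel-verified Lean document; each statement's English description precedes it below -/
import Mathlib

section
/- Let G be a group, H a subgroup of G, ξ ∈ G, and a, b integers with a + b ≠ 0. If ξᵃHξᵇ ⊆ H, then ξᵃHξᵇ = H. -/
/-- For integers `a`, `b` with `a + b ≠ 0`, the condition `ξᵃHξᵇ ⊆ H`
implies `ξᵃHξᵇ = H`. -/
theorem stmt_3 {G : Type*} [Group G] (H : Subgroup G) (ξ : G) (a b : ℤ)
    (hab : a + b ≠ 0)
    (hsub : (fun h => ξ ^ a * h * ξ ^ b) '' (H : Set G) ⊆ (H : Set G)) :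
    (fun h => ξ ^ a * h * ξ ^ b) '' (H : Set G) = (H : Set G) := by
  set n : ℤ := a + b with hn
  have hmem : ∀ h ∈ H, ξ ^ a * h * ξ ^ b ∈ H := fun h hh => hsub ⟨h, hh, rfl⟩
  have ht : ξ ^ n ∈ H := by
    have := hmem 1 H.one_mem
    simpa [hn, zpow_add] using this
  have hc : ∀ h ∈ H, ξ ^ a * h * (ξ ^ a)⁻¹ ∈ H := by
    intro h hh
    have h1 := H.mul_mem (hmem h hh) (H.inv_mem ht)
    have e : ξ ^ a * h * ξ ^ b * (ξ ^ n)⁻¹ = ξ ^ a * h * (ξ ^ a)⁻¹ := by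
      rw [hn]; group
    rwa [e] at h1
  have hck : ∀ m : ℕ, ∀ h ∈ H, (ξ ^ a) ^ m * h * ((ξ ^ a) ^ m)⁻¹ ∈ H := by
    intro m
    induction m with
    | zero => intro h hh; simpa using hh
    | succ k ih =>
      intro h hh
      have h2 := hc _ (ih h hh)
      have e : ξ ^ a * ((ξ ^ a) ^ k * h * ((ξ ^ a) ^ k)⁻¹) * (ξ ^ a)⁻¹
          = (ξ ^ a) ^ (k + 1) * h * ((ξ ^ a) ^ (k + 1))⁻¹ := by group
      rwa [e] at h2
  have hcn : (ξ ^ a) ^ n ∈ H := by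
    have e : (ξ ^ a) ^ n = (ξ ^ n) ^ a := by
      rw [← zpow_mul, ← zpow_mul, mul_comm]
    rw [e]; exact H.zpow_mem ht a
  have hkey : ∀ h ∈ H, (ξ ^ a)⁻¹ * h * ξ ^ a ∈ H := by
    intro h hh
    rcases lt_or_gt_of_ne hab with hneg | hpos
    · obtain ⟨m, hm⟩ : ∃ m : ℕ, n = -((m : ℤ) + 1) := ⟨(-n - 1).toNat, by omega⟩
      have h2 := hck m h hh
      have h3 := H.mul_mem (H.mul_mem hcn h2) (H.inv_mem hcn)
      have e : (ξ ^ a) ^ n * ((ξ ^ a) ^ m * h * ((ξ ^ a) ^ m)⁻¹) * ((ξ ^ a) ^ n)⁻¹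
          = (ξ ^ a)⁻¹ * h * ξ ^ a := by
        rw [hm]; group
      rwa [e] at h3
    · obtain ⟨m, hm⟩ : ∃ m : ℕ, n = (m : ℤ) + 1 := ⟨(n - 1).toNat, by omega⟩
      have h2 := hck m h hh
      have h3 := H.mul_mem (H.mul_mem (H.inv_mem hcn) h2) hcn
      have e : ((ξ ^ a) ^ n)⁻¹ * ((ξ ^ a) ^ m * h * ((ξ ^ a) ^ m)⁻¹) * (ξ ^ a) ^ n
          = (ξ ^ a)⁻¹ * h * ξ ^ a := by
        rw [hm]; group
      rwa [e] at h3
  apply Set.Subset.antisymm hsub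
  intro x hx
  refine ⟨(ξ ^ a)⁻¹ * x * (ξ ^ b)⁻¹, ?_, by simp; group⟩
  have e : (ξ ^ a)⁻¹ * x * (ξ ^ b)⁻¹ = ((ξ ^ a)⁻¹ * x * ξ ^ a) * (ξ ^ n)⁻¹ := by
    rw [hn]; group
  rw [e]
  exact H.mul_mem (hkey x hx) (H.inv_mem ht)
end

section
/- Let k be a field and x₁, …, x_n distinct elements of k with n ≥ 3. Suppose that the only solutions of x_i − x_j = x_k − x_l with indices in {1,…,n} are the trivial ones (i = k, j = l, or i = j and k = l). Then for any α ∈ k, if the set {x₁,…,x_n} is invariant under the map x ↦ α − x, a contradiction arises; i.e., no α exists with {α − x₁, …, α − x_n} = {x₁, …, x_n}. -/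
/-- If `x₁, …, x_n` (`n ≥ 3`) are distinct elements of a field satisfying the
Sidon-type condition (only trivial solutions of `x_i − x_j = x_k − x_l`), then
the set `{x₁,…,x_n}` is not invariant under any map `x ↦ α − x`. -/
theorem stmt_18 {k : Type*} [Field k] (n : ℕ) (hn : 3 ≤ n)
    (x : Fin n → k) (hinj : Function.Injective x)
    (hsidon : ∀ i j K l : Fin n, x i - x j = x K - x l →
      (i = K ∧ j = l) ∨ (i = j ∧ K = l)) :
    ∀ α : k, ¬ ((fun t => α - t) '' Set.range x = Set.range x) := by
  intro α h
  have hσ : ∀ i : Fin n, ∃ j, x j = α - x i := by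
    intro i
    have : α - x i ∈ Set.range x := by
      rw [← h]; exact ⟨x i, ⟨i, rfl⟩, rfl⟩
    exact this
  choose σ hσ using hσ
  have key : ∀ i j : Fin n, i ≠ j → σ j = i := by
    intro i j hij
    have e : x i - x (σ j) = x j - x (σ i) := by
      rw [hσ, hσ]; ring
    rcases hsidon _ _ _ _ e with ⟨h1, _⟩ | ⟨h1, _⟩
    · exact absurd h1 hij
    · exact h1.symm
  have h0 : (⟨0, by omega⟩ : Fin n) ≠ ⟨1, by omega⟩ := by simp [Fin.ext_iff]
  have h2 : (⟨2, by omega⟩ : Fin n) ≠ ⟨1, by omega⟩ := by simp [Fin.ext_iff]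
  have := (key _ _ h0).symm.trans (key _ _ h2)
  simp [Fin.ext_iff] at this
end
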